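/- Under the hypotheses of Theorem 1 (γ a T-periodic hyperbolic limit cycle, so κ = (1/T)∫₀ᵀ div X(γ) dt ≠ 0), for |ε| > 0 sufficiently small the closed curve z_ε(t) = γ(t) + ε u(t)(γ'(t))⊥ satisfies X(z_ε(t)) · (z_ε'(t))⊥ ≠ 0 for all t ∈ [0, T], i.e., z_ε is strictly transversal to the flow of X. -/

import Mathlib

open intervalIntegral

set_option maxHeartbeats 1000000 in
theorem stmt_4 (T : ℝ) (hT : 0 < T)
    (X : ℝ × ℝ → ℝ × ℝ) (hX : ContDiff ℝ 2 X)
    (divX : ℝ × ℝ → ℝ)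
    (hdiv : ∀ z : ℝ × ℝ, divX z = (fderiv ℝ X z (1, 0)).1 + (fderiv ℝ X z (0, 1)).2)
    (γ γ' : ℝ → ℝ × ℝ)
    (hγ : ∀ t : ℝ, HasDerivAt γ (γ' t) t)
    (hsol : ∀ t : ℝ, γ' t = X (γ t))
    (hper : ∀ t : ℝ, γ (t + T) = γ t)
    (hreg : ∀ t : ℝ, γ' t ≠ 0)
    (κ : ℝ) (hκ : κ = (1 / T) * ∫ t in (0:ℝ)..T, divX (γ t))
    (E : ℝ → ℝ)
    (hE : ∀ t : ℝ, E t = Real.exp ((∫ s in (0:ℝ)..t, divX (γ s)) - κ * t))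
    (u : ℝ → ℝ)
    (hu : ∀ t : ℝ, u t = E t / ((γ' t).1 ^ 2 + (γ' t).2 ^ 2))
    (z : ℝ → ℝ → ℝ × ℝ)
    (hz : ∀ ε t : ℝ, z ε t =
      ((γ t).1 + ε * u t * (γ' t).2, (γ t).2 - ε * u t * (γ' t).1))
    (hhyp : κ ≠ 0) :
    ∃ ε₀ > (0:ℝ), ∀ ε : ℝ, ε ≠ 0 → |ε| < ε₀ → ∀ t ∈ Set.Icc (0:ℝ) T,
      (X (z ε t)).1 * (deriv (fun s => (z ε s).2) t) -
        (X (z ε t)).2 * (deriv (fun s => (z ε s).1) t) ≠ 0 := by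
  -- Basic regularity facts
  have hXd : Differentiable ℝ X := hX.differentiable (by norm_num)
  have hfcont : Continuous (fderiv ℝ X) := hX.continuous_fderiv (by norm_num)
  have hγc : Continuous γ := continuous_iff_continuousAt.2 fun t => (hγ t).continuousAt
  have hγ'eq : γ' = fun t => X (γ t) := funext hsol
  have hγ'c : Continuous γ' := by rw [hγ'eq]; exact hX.continuous.comp hγc
  have hγ'd : ∀ t, HasDerivAt γ' (fderiv ℝ X (γ t) (γ' t)) t := by
    intro t
    have key : HasDerivAt (fun s => X (γ s)) (fderiv ℝ X (γ t) (γ' t)) t :=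
      (hXd (γ t)).hasFDerivAt.comp_hasDerivAt t (hγ t)
    exact key.congr_of_eventuallyEq (Filter.Eventually.of_forall fun s => hsol s)
  have fstd : ∀ (f : ℝ → ℝ × ℝ) (f' : ℝ × ℝ) (t : ℝ), HasDerivAt f f' t →
      HasDerivAt (fun s => (f s).1) f'.1 t := fun f f' t h =>
    (ContinuousLinearMap.fst ℝ ℝ ℝ).hasFDerivAt.comp_hasDerivAt t h
  have sndd : ∀ (f : ℝ → ℝ × ℝ) (f' : ℝ × ℝ) (t : ℝ), HasDerivAt f f' t →
      HasDerivAt (fun s => (f s).2) f'.2 t := fun f f' t h =>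
    (ContinuousLinearMap.snd ℝ ℝ ℝ).hasFDerivAt.comp_hasDerivAt t h
  have hAd : ∀ t, HasDerivAt (fun s => (γ' s).1) (fderiv ℝ X (γ t) (γ' t)).1 t :=
    fun t => fstd _ _ t (hγ'd t)
  have hBd : ∀ t, HasDerivAt (fun s => (γ' s).2) (fderiv ℝ X (γ t) (γ' t)).2 t :=
    fun t => sndd _ _ t (hγ'd t)
  have hγ''c : Continuous (fun t => fderiv ℝ X (γ t) (γ' t)) :=
    (hfcont.comp hγc).clm_apply hγ'c
  -- positivity of the norm squared
  have hN : ∀ t, 0 < (γ' t).1 ^ 2 + (γ' t).2 ^ 2 := by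
    intro t
    have h := hreg t
    have h1 : (γ' t).1 ≠ 0 ∨ (γ' t).2 ≠ 0 := by
      by_contra hc
      push_neg at hc
      exact h (Prod.ext hc.1 hc.2)
    rcases h1 with h1 | h1 <;> positivity
  have hNne : ∀ t, ((γ' t).1 ^ 2 + (γ' t).2 ^ 2) ≠ 0 := fun t => (hN t).ne'
  have hNd : ∀ t, HasDerivAt (fun s => (γ' s).1 ^ 2 + (γ' s).2 ^ 2)
      (2 * ((γ' t).1 * (fderiv ℝ X (γ t) (γ' t)).1 + (γ' t).2 * (fderiv ℝ X (γ t) (γ' t)).2)) t := by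
    intro t
    have h := ((hAd t).pow 2).add ((hBd t).pow 2)
    refine h.congr_deriv ?_
    push_cast
    ring
  have hNc : Continuous (fun t => (γ' t).1 ^ 2 + (γ' t).2 ^ 2) :=
    (hγ'c.fst.pow 2).add (hγ'c.snd.pow 2)
  -- divergence along γ
  have hDc : Continuous (fun t => divX (γ t)) := by
    have h : (fun t => divX (γ t)) =
        fun t => (fderiv ℝ X (γ t) (1, 0)).1 + (fderiv ℝ X (γ t) (0, 1)).2 :=
      funext fun t => hdiv _
    rw [h]
    exact (((hfcont.comp hγc).clm_apply continuous_const).fst).add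
      (((hfcont.comp hγc).clm_apply continuous_const).snd)
  have hIder : ∀ t, HasDerivAt (fun t => ∫ s in (0:ℝ)..t, divX (γ s)) (divX (γ t)) t :=
    fun t => intervalIntegral.integral_hasDerivAt_right (hDc.intervalIntegrable 0 t)
      (hDc.stronglyMeasurableAtFilter _ _) hDc.continuousAt
  -- derivative of E
  have hEpos : ∀ t, 0 < E t := by intro t; rw [hE]; exact Real.exp_pos _
  have hEd : ∀ t, HasDerivAt E (E t * (divX (γ t) - κ)) t := by
    intro t
    have hEeq : E = fun t => Real.exp ((∫ s in (0:ℝ)..t, divX (γ s)) - κ * t) := funext hE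
    rw [hEeq]
    have h3 : HasDerivAt (fun t : ℝ => κ * t) κ t := by
      simpa using (hasDerivAt_id t).const_mul κ
    exact ((hIder t).sub h3).exp
  have hEc : Continuous E := continuous_iff_continuousAt.2 fun t => (hEd t).continuousAt
  -- derivative of u
  obtain ⟨U', hU'⟩ : ∃ U' : ℝ → ℝ, ∀ t, U' t = (divX (γ t) - κ) * u t -
      2 * u t * ((γ' t).1 * (fderiv ℝ X (γ t) (γ' t)).1 + (γ' t).2 * (fderiv ℝ X (γ t) (γ' t)).2)
        / ((γ' t).1 ^ 2 + (γ' t).2 ^ 2) := ⟨_, fun t => rfl⟩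
  have hud : ∀ t, HasDerivAt u (U' t) t := by
    intro t
    have hueq : u = fun t => E t / ((γ' t).1 ^ 2 + (γ' t).2 ^ 2) := funext hu
    rw [hueq]
    have h := (hEd t).div (hNd t) (hNne t)
    refine h.congr_deriv ?_
    rw [hU', hu t]
    field_simp [hNne t]
  have huc : Continuous u := continuous_iff_continuousAt.2 fun t => (hud t).continuousAt
  have hU'c : Continuous U' := by
    have h : U' = fun t => (divX (γ t) - κ) * u t -
        2 * u t * ((γ' t).1 * (fderiv ℝ X (γ t) (γ' t)).1 + (γ' t).2 * (fderiv ℝ X (γ t) (γ' t)).2)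
          / ((γ' t).1 ^ 2 + (γ' t).2 ^ 2) := funext hU'
    rw [h]
    exact ((hDc.sub continuous_const).mul huc).sub
      (((continuous_const.mul huc).mul
        ((hγ'c.fst.mul hγ''c.fst).add (hγ'c.snd.mul hγ''c.snd))).div hNc hNne)
  -- Q1 Q2 : derivatives of u * γ'
  obtain ⟨Q1, hQ1⟩ : ∃ f : ℝ → ℝ, ∀ t, f t =
      U' t * (γ' t).1 + u t * (fderiv ℝ X (γ t) (γ' t)).1 := ⟨_, fun t => rfl⟩
  obtain ⟨Q2, hQ2⟩ : ∃ f : ℝ → ℝ, ∀ t, f t =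
      U' t * (γ' t).2 + u t * (fderiv ℝ X (γ t) (γ' t)).2 := ⟨_, fun t => rfl⟩
  have huAd : ∀ t, HasDerivAt (fun s => u s * (γ' s).1) (Q1 t) t := by
    intro t; rw [hQ1]; exact (hud t).mul (hAd t)
  have huBd : ∀ t, HasDerivAt (fun s => u s * (γ' s).2) (Q2 t) t := by
    intro t; rw [hQ2]; exact (hud t).mul (hBd t)
  have hQ1c : Continuous Q1 := by
    have h : Q1 = fun t => U' t * (γ' t).1 + u t * (fderiv ℝ X (γ t) (γ' t)).1 := funext hQ1
    rw [h]; exact (hU'c.mul hγ'c.fst).add (huc.mul hγ''c.fst)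
  have hQ2c : Continuous Q2 := by
    have h : Q2 = fun t => U' t * (γ' t).2 + u t * (fderiv ℝ X (γ t) (γ' t)).2 := funext hQ2
    rw [h]; exact (hU'c.mul hγ'c.snd).add (huc.mul hγ''c.snd)
  -- W and Z
  obtain ⟨W, hW⟩ : ∃ W : ℝ → ℝ × ℝ, ∀ t, W t =
      (u t * (γ' t).2, -(u t * (γ' t).1)) := ⟨_, fun t => rfl⟩
  have hWc : Continuous W := by
    have h : W = fun t => ((u t * (γ' t).2 : ℝ), (-(u t * (γ' t).1) : ℝ)) := funext hW
    rw [h]; exact (huc.mul hγ'c.snd).prodMk (huc.mul hγ'c.fst).neg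
  obtain ⟨Z, hZ⟩ : ∃ Z : ℝ × ℝ → ℝ × ℝ, ∀ p : ℝ × ℝ, Z p = γ p.2 + p.1 • W p.2 :=
    ⟨_, fun p => rfl⟩
  have hZc : Continuous Z := by
    have h : Z = fun p : ℝ × ℝ => γ p.2 + p.1 • W p.2 := funext hZ
    rw [h]
    exact (hγc.comp continuous_snd).add (continuous_fst.smul (hWc.comp continuous_snd))
  have hzZ : ∀ ε t : ℝ, z ε t = Z (ε, t) := by
    intro ε t
    rw [hz, hZ, hW]
    simp only [Prod.mk.injEq, Prod.ext_iff, Prod.fst_add, Prod.snd_add, Prod.smul_fst,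
      Prod.smul_snd, smul_eq_mul]
    constructor <;> ring
  have hZ0 : ∀ t, Z (0, t) = γ t := by intro t; rw [hZ]; simp
  -- Φ and S
  obtain ⟨Φ, hΦ⟩ : ∃ Φ : ℝ × ℝ → ℝ, ∀ p : ℝ × ℝ, Φ p =
      (X (Z p)).1 * ((γ' p.2).2 - p.1 * Q1 p.2) -
      (X (Z p)).2 * ((γ' p.2).1 + p.1 * Q2 p.2) := ⟨_, fun p => rfl⟩
  obtain ⟨S, hS⟩ : ∃ S : ℝ × ℝ → ℝ, ∀ p : ℝ × ℝ, S p =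
      ((fderiv ℝ X (Z p)) (W p.2)).1 * ((γ' p.2).2 - p.1 * Q1 p.2) +
        (X (Z p)).1 * (-(Q1 p.2)) -
      (((fderiv ℝ X (Z p)) (W p.2)).2 * ((γ' p.2).1 + p.1 * Q2 p.2) +
        (X (Z p)).2 * (Q2 p.2)) := ⟨_, fun p => rfl⟩
  -- Φ(0,t) = 0
  have hΦ00 : ∀ t, Φ (0, t) = 0 := by
    intro t
    have h : Φ (0, t) = (X (Z (0, t))).1 * ((γ' t).2 - 0 * Q1 t) -
        (X (Z (0, t))).2 * ((γ' t).1 + 0 * Q2 t) := hΦ (0, t)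
    rw [h, hZ0 t, ← hsol t]
    ring
  -- derivative of Φ in ε
  have hΦder : ∀ (t ε : ℝ), HasDerivAt (fun e => Φ (e, t)) (S (ε, t)) ε := by
    intro t ε
    have hZe : HasDerivAt (fun e => Z (e, t)) (W t) ε := by
      have h : (fun e => Z (e, t)) = fun e => γ t + e • W t := funext fun e => hZ (e, t)
      rw [h]
      simpa using ((hasDerivAt_id ε).smul_const (W t)).const_add (γ t)
    have hXZ : HasDerivAt (fun e => X (Z (e, t))) ((fderiv ℝ X (Z (ε, t))) (W t)) ε :=
      (hXd (Z (ε, t))).hasFDerivAt.comp_hasDerivAt ε hZe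
    have h1 := fstd _ _ _ hXZ
    have h2 := sndd _ _ _ hXZ
    have hfun : (fun e => Φ (e, t)) = fun e =>
        (X (Z (e, t))).1 * ((γ' t).2 - e * Q1 t) -
        (X (Z (e, t))).2 * ((γ' t).1 + e * Q2 t) := funext fun e => hΦ (e, t)
    have hval : S (ε, t) =
        ((fderiv ℝ X (Z (ε, t))) (W t)).1 * ((γ' t).2 - ε * Q1 t) +
          (X (Z (ε, t))).1 * (-(Q1 t)) -
        (((fderiv ℝ X (Z (ε, t))) (W t)).2 * ((γ' t).1 + ε * Q2 t) +
          (X (Z (ε, t))).2 * (Q2 t)) := hS (ε, t)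
    rw [hfun, hval]
    exact (h1.mul ((hasDerivAt_mul_const (Q1 t)).const_sub ((γ' t).2))).sub
      (h2.mul ((hasDerivAt_mul_const (Q2 t)).const_add ((γ' t).1)))
  -- continuity of S
  have hScont : Continuous S := by
    have h : S = fun p : ℝ × ℝ =>
      ((fderiv ℝ X (Z p)) (W p.2)).1 * ((γ' p.2).2 - p.1 * Q1 p.2) +
        (X (Z p)).1 * (-(Q1 p.2)) -
      (((fderiv ℝ X (Z p)) (W p.2)).2 * ((γ' p.2).1 + p.1 * Q2 p.2) +
        (X (Z p)).2 * (Q2 p.2)) := funext hS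
    rw [h]
    have c1 : Continuous fun p : ℝ × ℝ => (fderiv ℝ X (Z p)) (W p.2) :=
      (hfcont.comp hZc).clm_apply (hWc.comp continuous_snd)
    have c2 : Continuous fun p : ℝ × ℝ => X (Z p) := hX.continuous.comp hZc
    have cA : Continuous fun p : ℝ × ℝ => (γ' p.2).1 := (hγ'c.comp continuous_snd).fst
    have cB : Continuous fun p : ℝ × ℝ => (γ' p.2).2 := (hγ'c.comp continuous_snd).snd
    have cQ1 : Continuous fun p : ℝ × ℝ => Q1 p.2 := hQ1c.comp continuous_snd
    have cQ2 : Continuous fun p : ℝ × ℝ => Q2 p.2 := hQ2c.comp continuous_snd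
    exact ((c1.fst.mul (cB.sub (continuous_fst.mul cQ1))).add (c2.fst.mul cQ1.neg)).sub
      ((c1.snd.mul (cA.add (continuous_fst.mul cQ2))).add (c2.snd.mul cQ2))
  -- S(0,t) = κ E t
  have hS0 : ∀ t, S (0, t) = κ * E t := by
    intro t
    have h : S (0, t) =
        ((fderiv ℝ X (Z (0, t))) (W t)).1 * ((γ' t).2 - 0 * Q1 t) +
          (X (Z (0, t))).1 * (-(Q1 t)) -
        (((fderiv ℝ X (Z (0, t))) (W t)).2 * ((γ' t).1 + 0 * Q2 t) +
          (X (Z (0, t))).2 * (Q2 t)) := hS (0, t)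
    rw [h, hZ0 t, ← hsol t]
    have hbasis : ∀ v : ℝ × ℝ, fderiv ℝ X (γ t) v =
        v.1 • fderiv ℝ X (γ t) (1, 0) + v.2 • fderiv ℝ X (γ t) (0, 1) := by
      intro v
      have hv : v = v.1 • ((1:ℝ), (0:ℝ)) + v.2 • ((0:ℝ), (1:ℝ)) := by
        simp [Prod.ext_iff]
      conv_lhs => rw [hv]
      rw [map_add, map_smul, map_smul]
    have e1 : (fderiv ℝ X (γ t) (W t)).1 =
        (W t).1 * (fderiv ℝ X (γ t) (1, 0)).1 + (W t).2 * (fderiv ℝ X (γ t) (0, 1)).1 := by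
      rw [hbasis (W t)]
      rfl
    have e2 : (fderiv ℝ X (γ t) (W t)).2 =
        (W t).1 * (fderiv ℝ X (γ t) (1, 0)).2 + (W t).2 * (fderiv ℝ X (γ t) (0, 1)).2 := by
      rw [hbasis (W t)]
      rfl
    have e3 : (fderiv ℝ X (γ t) (γ' t)).1 =
        (γ' t).1 * (fderiv ℝ X (γ t) (1, 0)).1 + (γ' t).2 * (fderiv ℝ X (γ t) (0, 1)).1 := by
      rw [hbasis (γ' t)]
      rfl
    have e4 : (fderiv ℝ X (γ t) (γ' t)).2 =
        (γ' t).1 * (fderiv ℝ X (γ t) (1, 0)).2 + (γ' t).2 * (fderiv ℝ X (γ t) (0, 1)).2 := by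
      rw [hbasis (γ' t)]
      rfl
    have hW1 : (W t).1 = u t * (γ' t).2 := by rw [hW]
    have hW2 : (W t).2 = -(u t * (γ' t).1) := by rw [hW]
    have hEN : E t = u t * ((γ' t).1 ^ 2 + (γ' t).2 ^ 2) := by
      rw [hu t]
      exact (div_mul_cancel₀ _ (hNne t)).symm
    rw [hQ1 t, hQ2 t, hU' t, e1, e2, e3, e4, hW1, hW2, hdiv (γ t), hEN]
    field_simp [hNne t]
    ring
  -- tube lemma
  have hopen : IsOpen {p : ℝ × ℝ | S p ≠ 0} := isOpen_compl_singleton.preimage hScont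
  have hsub : (({0} : Set ℝ) ×ˢ Set.Icc (0:ℝ) T) ⊆ {p : ℝ × ℝ | S p ≠ 0} := by
    rintro ⟨e, t⟩ ⟨he, ht⟩
    simp only [Set.mem_singleton_iff] at he
    subst he
    simp only [Set.mem_setOf_eq, hS0 t]
    exact mul_ne_zero hhyp (hEpos t).ne'
  obtain ⟨U, V, hUo, _, hU0, hVI, hUV⟩ :=
    generalized_tube_lemma isCompact_singleton isCompact_Icc hopen hsub
  obtain ⟨ε₀, hε₀pos, hball⟩ := Metric.isOpen_iff.1 hUo 0 (hU0 rfl)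
  refine ⟨ε₀, hε₀pos, ?_⟩
  intro ε hεne hεlt t ht
  -- rewrite the goal as Φ (ε, t) ≠ 0
  have hderiv1 : deriv (fun s => (z ε s).1) t = (γ' t).1 + ε * Q2 t := by
    have hf : (fun s => (z ε s).1) = fun s => (γ s).1 + ε * (u s * (γ' s).2) :=
      funext fun s => by rw [hz]; ring
    rw [hf]
    exact ((fstd _ _ t (hγ t)).add ((huBd t).const_mul ε)).deriv
  have hderiv2 : deriv (fun s => (z ε s).2) t = (γ' t).2 - ε * Q1 t := by
    have hf : (fun s => (z ε s).2) = fun s => (γ s).2 - ε * (u s * (γ' s).1) :=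
      funext fun s => by rw [hz]; ring
    rw [hf]
    exact ((sndd _ _ t (hγ t)).sub ((huAd t).const_mul ε)).deriv
  have hPhi : Φ (ε, t) = (X (Z (ε, t))).1 * ((γ' t).2 - ε * Q1 t) -
      (X (Z (ε, t))).2 * ((γ' t).1 + ε * Q2 t) := hΦ (ε, t)
  rw [hderiv1, hderiv2, hzZ ε t, ← hPhi]
  -- mean value theorem in ε
  intro hcontra
  rcases lt_or_gt_of_ne hεne with hneg | hpos
  · obtain ⟨c, hc, hceq⟩ := exists_hasDerivAt_eq_slope (fun e => Φ (e, t)) (fun e => S (e, t))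
      hneg (fun x _ => (hΦder t x).continuousAt.continuousWithinAt)
      (fun x _ => hΦder t x)
    have hc0 : S (c, t) = 0 := by
      rw [hceq, hΦ00 t, hcontra]
      simp
    have hcU : c ∈ U := by
      apply hball
      rw [Metric.mem_ball, Real.dist_eq, sub_zero, abs_lt]
      rw [abs_lt] at hεlt
      exact ⟨by linarith [hc.1], by linarith [hc.2]⟩
    exact hUV (Set.mk_mem_prod hcU (hVI ht)) hc0
  · obtain ⟨c, hc, hceq⟩ := exists_hasDerivAt_eq_slope (fun e => Φ (e, t)) (fun e => S (e, t))
      hpos (fun x _ => (hΦder t x).continuousAt.continuousWithinAt)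
      (fun x _ => hΦder t x)
    have hc0 : S (c, t) = 0 := by
      rw [hceq, hΦ00 t, hcontra]
      simp
    have hcU : c ∈ U := by
      apply hball
      rw [Metric.mem_ball, Real.dist_eq, sub_zero, abs_lt]
      rw [abs_lt] at hεlt
      exact ⟨by linarith [hc.1], by linarith [hc.2]⟩
    exact hUV (Set.mk_mem_prod hcU (hVI ht)) hc0
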